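/- For ν > 0 and a locally integrable function f : (0,∞) → ℝ of exponential order (i.e. |f(t)| ≤ M e^{at} for some constants M, a), the Laplace transform of the Riemann–Liouville fractional integral satisfies L{(I^ν f)(t)}(p) = p^{-ν} L{f}(p) for all real p > max(a, 0). -/

import Mathlib

open Real MeasureTheory

/-- The k-Gamma function (via its closed form `Γ_k(x) = k^(x/k-1) Γ(x/k)`). -/
noncomputable def kGamma (k x : ℝ) : ℝ := k ^ (x / k - 1) * Real.Gamma (x / k)

/-- The k-Struve function. -/
noncomputable def kStruve (k ν c x : ℝ) : ℝ :=
  ∑' r : ℕ, (-c) ^ r / (kGamma k ((r : ℝ) * k + ν + 3 * k / 2) * Real.Gamma ((r : ℝ) + 3 / 2)) *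
    (x / 2) ^ (2 * (r : ℝ) + ν / k + 1)

/-- The classical Struve function. -/
noncomputable def struveH (p x : ℝ) : ℝ :=
  ∑' n : ℕ, (-1) ^ n / (Real.Gamma ((n : ℝ) + 3 / 2) * Real.Gamma ((n : ℝ) + p + 3 / 2)) *
    (x / 2) ^ (2 * (n : ℝ) + p + 1)

/-- The Riemann–Liouville fractional integral of order ν. -/
noncomputable def RL (ν : ℝ) (f : ℝ → ℝ) (t : ℝ) : ℝ :=
  (1 / Real.Gamma ν) * ∫ s in (0 : ℝ)..t, (t - s) ^ (ν - 1) * f s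

/-- The Laplace transform. -/
noncomputable def laplace (f : ℝ → ℝ) (p : ℝ) : ℝ :=
  ∫ t in Set.Ioi (0 : ℝ), Real.exp (-(p * t)) * f t

/-- The real two-parameter Mittag-Leffler function. -/
noncomputable def MLE (α β x : ℝ) : ℝ := ∑' n : ℕ, x ^ n / Real.Gamma (α * (n : ℝ) + β)


lemma shift_integral (s : ℝ) (h : ℝ → ℝ) :
    ∫ t in Set.Ioi s, h t = ∫ u in Set.Ioi (0:ℝ), h (u + s) := by
  have hmp : MeasurePreserving (fun u : ℝ => u + s) volume volume :=
    measurePreserving_add_right volume s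
  have hemb : MeasurableEmbedding (fun u : ℝ => u + s) :=
    (MeasurableEquiv.addRight s).measurableEmbedding
  have hpre : (fun u : ℝ => u + s) ⁻¹' Set.Ioi s = Set.Ioi 0 := by
    ext u; simp [Set.mem_Ioi]
  rw [← hmp.setIntegral_preimage_emb hemb h (Set.Ioi s), hpre]

lemma base_int {ν p : ℝ} (hν : 0 < ν) (hp0 : 0 < p) :
    ∫ u in Set.Ioi (0:ℝ), u ^ (ν - 1) * Real.exp (-(p * u)) = p ^ (-ν) * Real.Gamma ν := by
  have h := integral_rpow_mul_exp_neg_mul_rpow (by norm_num : (0:ℝ) < 1)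
    (by linarith : (-1:ℝ) < ν - 1) hp0
  simp only [rpow_one, neg_mul] at h
  rw [h]
  norm_num

lemma base_integrable {ν p : ℝ} (hν : 0 < ν) (hp0 : 0 < p) :
    IntegrableOn (fun u : ℝ => u ^ (ν - 1) * Real.exp (-(p * u))) (Set.Ioi 0) := by
  have h := integrableOn_rpow_mul_exp_neg_mul_rpow (by linarith : (-1:ℝ) < ν - 1) zero_lt_one hp0
  simpa [rpow_one, neg_mul] using h

lemma tail_integral {ν p : ℝ} (hν : 0 < ν) (hp0 : 0 < p) (s : ℝ) :
    ∫ t in Set.Ioi s, Real.exp (-(p * t)) * (t - s) ^ (ν - 1)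
      = Real.exp (-(p * s)) * (p ^ (-ν) * Real.Gamma ν) := by
  rw [shift_integral]
  have heq : ∀ u ∈ Set.Ioi (0:ℝ),
      Real.exp (-(p * (u + s))) * (u + s - s) ^ (ν - 1)
        = Real.exp (-(p * s)) * (u ^ (ν - 1) * Real.exp (-(p * u))) := by
    intro u _
    rw [add_sub_cancel_right, mul_add, neg_add, Real.exp_add]
    ring
  rw [setIntegral_congr_fun measurableSet_Ioi heq, integral_const_mul, base_int hν hp0]

lemma tail_integrable {ν p : ℝ} (hν : 0 < ν) (hp0 : 0 < p) (s : ℝ) :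
    IntegrableOn (fun t : ℝ => Real.exp (-(p * t)) * (t - s) ^ (ν - 1)) (Set.Ioi s) := by
  have hmp : MeasurePreserving (fun u : ℝ => u + s) volume volume :=
    measurePreserving_add_right volume s
  have hemb : MeasurableEmbedding (fun u : ℝ => u + s) :=
    (MeasurableEquiv.addRight s).measurableEmbedding
  have hpre : (fun u : ℝ => u + s) ⁻¹' Set.Ioi s = Set.Ioi 0 := by
    ext u; simp [Set.mem_Ioi]
  rw [← hmp.integrableOn_comp_preimage hemb, hpre]
  have : ((fun t : ℝ => Real.exp (-(p * t)) * (t - s) ^ (ν - 1)) ∘ (fun u : ℝ => u + s))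
      = fun u : ℝ => Real.exp (-(p * s)) * (u ^ (ν - 1) * Real.exp (-(p * u))) := by
    funext u
    simp only [Function.comp_apply, add_sub_cancel_right, mul_add, neg_add, Real.exp_add]
    ring
  rw [this]
  exact (base_integrable hν hp0).const_mul _

noncomputable def Fker (ν p : ℝ) (g : ℝ → ℝ) : ℝ × ℝ → ℝ :=
  Set.indicator {q : ℝ × ℝ | q.2 < q.1}
    (fun q => Real.exp (-(p * q.1)) * ((q.1 - q.2) ^ (ν - 1) * g q.2))

set_option maxHeartbeats 1000000 in
lemma key (ν : ℝ) (hν : 0 < ν) (g : ℝ → ℝ) (hg : Measurable g)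
    (M a p : ℝ)
    (hbound : ∀ᵐ s ∂(volume.restrict (Set.Ioi 0)), |g s| ≤ M * Real.exp (a * s))
    (hpa : a < p) (hp0 : 0 < p) :
    laplace (RL ν g) p = p ^ (-ν) * laplace g p := by
  have hΓ : 0 < Real.Gamma ν := Real.Gamma_pos_of_pos hν
  set μ : Measure ℝ := volume.restrict (Set.Ioi 0) with hμ
  set F : ℝ × ℝ → ℝ := Fker ν p g with hF
  -- sections
  have hsecT : ∀ s : ℝ, (fun t => F (t, s)) =
      Set.indicator (Set.Ioi s) (fun t => Real.exp (-(p * t)) * ((t - s) ^ (ν - 1) * g s)) := by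
    intro s; funext t
    by_cases h : s < t
    · simp [hF, Fker, Set.indicator_apply, Set.mem_setOf_eq, Set.mem_Ioi, h]
    · simp [hF, Fker, Set.indicator_apply, Set.mem_setOf_eq, Set.mem_Ioi, h]
  have hsecS : ∀ t : ℝ, (fun s => F (t, s)) =
      Set.indicator (Set.Iio t) (fun s => Real.exp (-(p * t)) * ((t - s) ^ (ν - 1) * g s)) := by
    intro t; funext s
    by_cases h : s < t
    · simp [hF, Fker, Set.indicator_apply, Set.mem_setOf_eq, Set.mem_Iio, h]
    · simp [hF, Fker, Set.indicator_apply, Set.mem_setOf_eq, Set.mem_Iio, h]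
  -- measurability
  have hFmeas : Measurable F := by
    rw [hF, Fker]
    apply Measurable.indicator
    · have : Measurable (fun q : ℝ × ℝ =>
        Real.exp (-(p * q.1)) * ((q.1 - q.2) ^ (ν - 1) * g q.2)) := by measurability
      exact this
    · exact measurableSet_lt measurable_snd measurable_fst
  have hFm : AEStronglyMeasurable F (μ.prod μ) := hFmeas.aestronglyMeasurable
  -- integrability of t-sections for a.e. s
  have hsec_int : ∀ᵐ s ∂μ, Integrable (fun t => F (t, s)) μ := by
    filter_upwards [ae_restrict_mem measurableSet_Ioi] with s hs
    rw [hsecT s]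
    have h1 : IntegrableOn (fun t => Real.exp (-(p * t)) * ((t - s) ^ (ν - 1) * g s))
        (Set.Ioi s) := by
      have := (tail_integrable hν hp0 s).mul_const (g s)
      simpa [mul_assoc, IntegrableOn] using this
    have h2 : Integrable (Set.indicator (Set.Ioi s)
        (fun t => Real.exp (-(p * t)) * ((t - s) ^ (ν - 1) * g s))) volume :=
      (integrable_indicator_iff measurableSet_Ioi).2 h1
    exact h2.restrict
  -- value of the norm-integral
  have hnormval : ∀ s ∈ Set.Ioi (0:ℝ), (∫ t, ‖F (t, s)‖ ∂μ)
      = (Real.exp (-(p * s)) * (p ^ (-ν) * Real.Gamma ν)) * |g s| := by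
    intro s hs
    have habs : (fun t => ‖F (t, s)‖) = Set.indicator (Set.Ioi s)
        (fun t => Real.exp (-(p * t)) * (t - s) ^ (ν - 1) * |g s|) := by
      funext t
      rw [congrFun (hsecT s) t]
      by_cases h : s < t
      · rw [Set.indicator_of_mem (Set.mem_Ioi.2 h), Set.indicator_of_mem (Set.mem_Ioi.2 h),
          Real.norm_eq_abs, abs_mul, abs_mul, abs_of_nonneg (Real.exp_pos _).le,
          abs_of_nonneg (rpow_nonneg (by linarith : (0:ℝ) ≤ t - s) _), mul_assoc]
      · have h' : t ∉ Set.Ioi s := by simpa [Set.mem_Ioi] using h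
        rw [Set.indicator_of_notMem h', Set.indicator_of_notMem h', norm_zero]
    rw [habs, hμ, integral_indicator measurableSet_Ioi,
      Measure.restrict_restrict measurableSet_Ioi,
      Set.inter_eq_self_of_subset_left (Set.Ioi_subset_Ioi hs.le)]
    rw [integral_mul_const, tail_integral hν hp0 s]
  -- integrability of the norm-integral function
  have hnormmeas : AEStronglyMeasurable (fun s => ∫ t, ‖F (t, s)‖ ∂μ) μ := by
    have hm : AEStronglyMeasurable (fun q : ℝ × ℝ => ‖F (q.2, q.1)‖) (μ.prod μ) :=
      ((hFmeas.comp measurable_swap).norm).aestronglyMeasurable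
    exact hm.integral_prod_right'
  have hnormint : Integrable (fun s => ∫ t, ‖F (t, s)‖ ∂μ) μ := by
    have hbd : IntegrableOn (fun s : ℝ =>
        (p ^ (-ν) * Real.Gamma ν * M) * Real.exp (-(p - a) * s)) (Set.Ioi 0) :=
      ((exp_neg_integrableOn_Ioi 0 (by linarith : (0:ℝ) < p - a)).const_mul _)
    apply Integrable.mono' hbd hnormmeas
    filter_upwards [ae_restrict_mem measurableSet_Ioi, hbound] with s hs hbs
    rw [Real.norm_eq_abs, hnormval s hs]
    have h1 : 0 ≤ Real.exp (-(p * s)) * (p ^ (-ν) * Real.Gamma ν) := by positivity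
    rw [abs_mul, abs_of_nonneg h1, abs_abs]
    have : Real.exp (-(p * s)) * (p ^ (-ν) * Real.Gamma ν) * |g s|
        ≤ Real.exp (-(p * s)) * (p ^ (-ν) * Real.Gamma ν) * (M * Real.exp (a * s)) := by
      apply mul_le_mul_of_nonneg_left hbs h1
    refine this.trans (le_of_eq ?_)
    rw [show -(p - a) * s = a * s + -(p * s) by ring, Real.exp_add]
    ring
  -- full integrability
  have hFint : Integrable F (μ.prod μ) :=
    (integrable_prod_iff' hFm).2 ⟨hsec_int, hnormint⟩
  -- main computation
  have step1 : ∀ t ∈ Set.Ioi (0:ℝ),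
      Real.exp (-(p * t)) * RL ν g t = (1 / Real.Gamma ν) * ∫ s, F (t, s) ∂μ := by
    intro t ht
    rw [hsecS t, hμ, integral_indicator measurableSet_Iio,
      Measure.restrict_restrict measurableSet_Iio, Set.Iio_inter_Ioi,
      integral_const_mul, RL, intervalIntegral.integral_of_le (le_of_lt ht),
      ← integral_Ioc_eq_integral_Ioo]
    ring
  have step2 : ∀ s ∈ Set.Ioi (0:ℝ),
      (∫ t, F (t, s) ∂μ) = (Real.Gamma ν * p ^ (-ν)) * (Real.exp (-(p * s)) * g s) := by
    intro s hs
    rw [hsecT s, hμ, integral_indicator measurableSet_Ioi,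
      Measure.restrict_restrict measurableSet_Ioi,
      Set.inter_eq_self_of_subset_left (Set.Ioi_subset_Ioi hs.le)]
    have : ∀ t ∈ Set.Ioi s, Real.exp (-(p * t)) * ((t - s) ^ (ν - 1) * g s)
        = (Real.exp (-(p * t)) * (t - s) ^ (ν - 1)) * g s := by
      intro t _; ring
    rw [setIntegral_congr_fun measurableSet_Ioi this, integral_mul_const,
      tail_integral hν hp0 s]
    ring
  calc laplace (RL ν g) p = ∫ t, Real.exp (-(p * t)) * RL ν g t ∂μ := rfl
    _ = ∫ t, (1 / Real.Gamma ν) * ∫ s, F (t, s) ∂μ ∂μ := by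
        exact setIntegral_congr_fun measurableSet_Ioi step1
    _ = (1 / Real.Gamma ν) * ∫ t, ∫ s, F (t, s) ∂μ ∂μ := integral_const_mul _ _
    _ = (1 / Real.Gamma ν) * ∫ s, ∫ t, F (t, s) ∂μ ∂μ := by
        have hFint' : Integrable (Function.uncurry fun t s => F (t, s)) (μ.prod μ) := hFint
        rw [integral_integral_swap hFint']
    _ = (1 / Real.Gamma ν) * ∫ s, (Real.Gamma ν * p ^ (-ν)) * (Real.exp (-(p * s)) * g s) ∂μ := by
        rw [setIntegral_congr_fun measurableSet_Ioi step2]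
    _ = (1 / Real.Gamma ν) * ((Real.Gamma ν * p ^ (-ν)) * ∫ s, Real.exp (-(p * s)) * g s ∂μ) := by
        rw [integral_const_mul]
    _ = p ^ (-ν) * laplace g p := by
        rw [laplace]
        field_simp
        ring


theorem laplace_RL (ν : ℝ) (hν : 0 < ν) (f : ℝ → ℝ)
    (hloc : LocallyIntegrableOn f (Set.Ioi 0))
    (M a : ℝ) (hbound : ∀ t > (0 : ℝ), |f t| ≤ M * Real.exp (a * t))
    (p : ℝ) (hp : max a 0 < p) :
    laplace (RL ν f) p = p ^ (-ν) * laplace f p := by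
  have hp0 : 0 < p := (le_max_right a 0).trans_lt hp
  have hpa : a < p := (le_max_left a 0).trans_lt hp
  have hm : AEStronglyMeasurable f (volume.restrict (Set.Ioi 0)) := hloc.aestronglyMeasurable
  set g : ℝ → ℝ := hm.mk f with hgdef
  have hgm : StronglyMeasurable g := hm.stronglyMeasurable_mk
  have hfg : f =ᵐ[volume.restrict (Set.Ioi 0)] g := hm.ae_eq_mk
  have hbound' : ∀ᵐ s ∂(volume.restrict (Set.Ioi 0)), |g s| ≤ M * Real.exp (a * s) := by
    filter_upwards [hfg, ae_restrict_mem measurableSet_Ioi] with s hseq hs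
    rw [← hseq]
    exact hbound s hs
  have hlap : laplace f p = laplace g p := by
    apply integral_congr_ae
    filter_upwards [hfg] with s h
    rw [h]
  have hRL : laplace (RL ν f) p = laplace (RL ν g) p := by
    apply integral_congr_ae
    filter_upwards [ae_restrict_mem measurableSet_Ioi] with t ht
    have : RL ν f t = RL ν g t := by
      unfold RL
      congr 1
      rw [intervalIntegral.integral_of_le (le_of_lt ht),
        intervalIntegral.integral_of_le (le_of_lt ht)]
      apply integral_congr_ae
      have hae : ∀ᵐ s ∂(volume.restrict (Set.Ioc 0 t)), f s = g s :=
        ae_restrict_of_ae_restrict_of_subset Set.Ioc_subset_Ioi_self hfg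
      filter_upwards [hae] with s h
      rw [h]
    rw [this]
  rw [hRL, hlap]
  exact key ν hν g hgm.measurable M a p hbound' hpa hp0
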